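/- Let X be a set, k ∈ ℕ, f₁,…,f_k real-valued functions on X, c₁,…,c_k ∈ ℝ, and let 𝒫 be the set of all finitely supported probability measures P on X with ∫ fᵢ dP = cᵢ for every i ∈ {1,…,k}. Let F : 𝒫 → ℝ ∪ {±∞} be quasi-convex, i.e. F(λP + (1−λ)Q) ≤ max{F(P), F(Q)} for all P, Q ∈ 𝒫 and λ ∈ [0,1]. Then sup{F(P) : P ∈ 𝒫} = sup{F(P) : P ∈ 𝒫, P concentrated on at most k + 1 points}. -/

import Mathlib

/-- Membership in the class `𝒫` of finitely supported probability measures on `X`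
(modelled as finitely supported nonnegative weight functions summing to `1`) satisfying
the moment constraints `∫ fᵢ dP = cᵢ`. -/
def isConstrainedFSProb {X : Type*} {k : ℕ} (f : Fin k → X → ℝ) (c : Fin k → ℝ)
    (P : X →₀ ℝ) : Prop :=
  (∀ x, 0 ≤ P x) ∧ P.sum (fun _ p => p) = 1 ∧ ∀ i, P.sum (fun x p => p * f i x) = c i

open Finset

/-- Convert a `Finsupp.sum` moment into a `Finset.sum` over any superset of the support. -/
lemma tyurin_sum_eq {X : Type*} (Q : X →₀ ℝ) (s : Finset X) (h : Q.support ⊆ s)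
    (g : X → ℝ) : Q.sum (fun x p => p * g x) = ∑ x ∈ s, Q x * g x :=
  Finsupp.sum_of_support_subset Q h _ (fun x _ => by simp)

lemma tyurin_wsum_eq {X : Type*} (Q : X →₀ ℝ) (s : Finset X) (h : Q.support ⊆ s) :
    Q.sum (fun _ p => p) = ∑ x ∈ s, Q x :=
  Finsupp.sum_of_support_subset Q h _ (fun x _ => rfl)

/-- A nonzero finitely supported function summing to zero has a negative value. -/
lemma tyurin_exists_neg {X : Type*} (w : X →₀ ℝ) (s : Finset X) (hsub : w.support ⊆ s)
    (hsum : ∑ x ∈ s, w x = 0) (hw : w ≠ 0) : ∃ x, w x < 0 := by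
  by_contra h
  push_neg at h
  apply hw
  ext x
  simp only [Finsupp.coe_zero, Pi.zero_apply]
  by_cases hx : x ∈ s
  · exact (Finset.sum_eq_zero_iff_of_nonneg (fun y _ => h y)).mp hsum x hx
  · exact Finsupp.notMem_support_iff.mp (fun hc => hx (hsub hc))

/-- If the support is larger than `k + 1`, there is a nonzero kernel direction `w`
supported inside `s` annihilating the constant function and every `f i`. -/
lemma tyurin_exists_kernel {X : Type*} {k : ℕ} (f : Fin k → X → ℝ) (s : Finset X)
    (hcard : k + 1 < s.card) :
    ∃ w : X →₀ ℝ, w ≠ 0 ∧ w.support ⊆ s ∧ (∑ x ∈ s, w x = 0) ∧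
      ∀ i, ∑ x ∈ s, w x * f i x = 0 := by
  classical
  set g : Fin (k + 1) → X → ℝ := Fin.cons (fun _ => 1) f with hg
  let φ : ((↥s) → ℝ) →ₗ[ℝ] (Fin (k + 1) → ℝ) :=
    { toFun := fun v j => ∑ x : ↥s, v x * g j (x : X)
      map_add' := by
        intro u v; funext j
        simp [add_mul, Finset.sum_add_distrib]
      map_smul' := by
        intro a v; funext j
        simp [Finset.mul_sum, mul_assoc] }
  have hninj : ¬ Function.Injective φ := by
    intro hinj
    have h1 := LinearMap.finrank_le_finrank_of_injective hinj
    rw [Module.finrank_fintype_fun_eq_card, Module.finrank_fintype_fun_eq_card,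
      Fintype.card_coe, Fintype.card_fin] at h1
    omega
  rw [Function.not_injective_iff] at hninj
  obtain ⟨a, b, hab, hne⟩ := hninj
  set v : (↥s) → ℝ := a - b with hv
  have hv0 : v ≠ 0 := sub_ne_zero_of_ne hne
  have hφv : φ v = 0 := by rw [hv, map_sub, hab, sub_self]
  set w : X →₀ ℝ := Finsupp.onFinset s (fun x => if h : x ∈ s then v ⟨x, h⟩ else 0)
    (fun x hx => by by_contra h; exact hx (dif_neg h)) with hw
  have hwapp : ∀ x : ↥s, w (x : X) = v x := by
    intro x
    simp only [hw, Finsupp.onFinset_apply]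
    rw [dif_pos x.2]
  have hwsum : ∀ h : X → ℝ, ∑ x ∈ s, w x * h x = ∑ x : ↥s, v x * h (x : X) := by
    intro h
    rw [← Finset.sum_coe_sort s (fun x => w x * h x)]
    exact Finset.sum_congr rfl (fun x _ => by rw [hwapp])
  refine ⟨w, ?_, Finsupp.support_onFinset_subset, ?_, ?_⟩
  · intro h0
    apply hv0
    funext x
    have := hwapp x
    rw [h0] at this
    simpa using this.symm
  · have h0 := congrFun hφv 0
    simp only [φ, hg, LinearMap.coe_mk, AddHom.coe_mk, Fin.cons_zero, Pi.zero_apply] at h0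
    have h2 := hwsum (fun _ => 1)
    simp only [mul_one] at h0 h2
    rw [h2]
    simpa using h0
  · intro i
    have h1 := congrFun hφv i.succ
    simp only [φ, hg, LinearMap.coe_mk, AddHom.coe_mk, Fin.cons_succ, Pi.zero_apply] at h1
    rw [hwsum (f i)]
    exact h1

/-- Moving along a kernel direction with a negative coordinate until a coordinate hits
zero produces a constrained measure with strictly smaller support. -/
lemma tyurin_shrink {X : Type*} {k : ℕ} (f : Fin k → X → ℝ) (c : Fin k → ℝ)
    (P w : X →₀ ℝ) (hP : isConstrainedFSProb f c P)
    (hsub : w.support ⊆ P.support)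
    (hsum : ∑ x ∈ P.support, w x = 0)
    (hmom : ∀ i, ∑ x ∈ P.support, w x * f i x = 0)
    (hneg : ∃ x, w x < 0) :
    ∃ t : ℝ, 0 < t ∧ isConstrainedFSProb f c (P + t • w) ∧
      (P + t • w).support.card < P.support.card := by
  classical
  obtain ⟨hPpos, hP1, hPm⟩ := hP
  set s := P.support with hs
  set neg : Finset X := s.filter (fun x => w x < 0) with hnegdef
  have hne : neg.Nonempty := by
    obtain ⟨x, hx⟩ := hneg
    exact ⟨x, Finset.mem_filter.mpr ⟨hsub (Finsupp.mem_support_iff.mpr (ne_of_lt hx)), hx⟩⟩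
  obtain ⟨x₀, hx₀, hmin⟩ := Finset.exists_min_image neg (fun x => P x / (-w x)) hne
  have hx₀s : x₀ ∈ s := (Finset.mem_filter.mp hx₀).1
  have hwx₀ : w x₀ < 0 := (Finset.mem_filter.mp hx₀).2
  have hPx₀ : 0 < P x₀ :=
    lt_of_le_of_ne (hPpos x₀) (Ne.symm (Finsupp.mem_support_iff.mp hx₀s))
  set t : ℝ := P x₀ / (-w x₀) with ht
  have htpos : 0 < t := div_pos hPx₀ (by linarith)
  have hQapp : ∀ x, (P + t • w) x = P x + t * w x := by
    intro x; simp
  have hQnn : ∀ x, 0 ≤ (P + t • w) x := by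
    intro x
    rw [hQapp]
    rcases le_or_gt 0 (w x) with h | h
    · have := hPpos x
      nlinarith
    · have hxneg : x ∈ neg := Finset.mem_filter.mpr
        ⟨hsub (Finsupp.mem_support_iff.mpr (ne_of_lt h)), h⟩
      have hle := hmin x hxneg
      have h2 : t * (-w x) ≤ P x := by
        rw [le_div_iff₀ (by linarith : (0:ℝ) < -w x)] at hle
        linarith
      linarith
  have hQsub : (P + t • w).support ⊆ s := by
    intro x hx
    by_contra hxs
    have hP0 : P x = 0 := Finsupp.notMem_support_iff.mp hxs
    have hw0 : w x = 0 := Finsupp.notMem_support_iff.mp (fun hc => hxs (hsub hc))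
    apply Finsupp.mem_support_iff.mp hx
    rw [hQapp, hP0, hw0]; ring
  have hQx₀ : (P + t • w) x₀ = 0 := by
    rw [hQapp, ht]
    have hne0 : w x₀ ≠ 0 := ne_of_lt hwx₀
    have h3 : P x₀ / -w x₀ * w x₀ = -P x₀ := by
      rw [div_mul_eq_mul_div, mul_div_assoc, div_neg, div_self hne0]
      ring
    linarith
  refine ⟨t, htpos, ⟨hQnn, ?_, ?_⟩, ?_⟩
  · rw [tyurin_wsum_eq _ s hQsub]
    have : ∑ x ∈ s, (P + t • w) x = (∑ x ∈ s, P x) + t * ∑ x ∈ s, w x := by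
      rw [Finset.mul_sum, ← Finset.sum_add_distrib]
      exact Finset.sum_congr rfl (fun x _ => by rw [hQapp])
    rw [this, hsum, ← tyurin_wsum_eq P s (le_refl _), hP1]
    ring
  · intro i
    rw [tyurin_sum_eq _ s hQsub]
    have : ∑ x ∈ s, (P + t • w) x * f i x
        = (∑ x ∈ s, P x * f i x) + t * ∑ x ∈ s, w x * f i x := by
      rw [Finset.mul_sum, ← Finset.sum_add_distrib]
      refine Finset.sum_congr rfl (fun x _ => ?_)
      rw [hQapp]; ring
    rw [this, hmom i, ← tyurin_sum_eq P s (le_refl _), hPm i]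
    ring
  · apply Finset.card_lt_card
    rw [Finset.ssubset_iff_of_subset hQsub]
    exact ⟨x₀, hx₀s, Finsupp.notMem_support_iff.mpr hQx₀⟩

/-- Key inductive step: every constrained measure has `F`-value bounded by the supremum
over constrained measures on at most `k + 1` points. -/
lemma tyurin_key {X : Type*} (k : ℕ)
    (f : Fin k → X → ℝ) (c : Fin k → ℝ) (F : (X →₀ ℝ) → EReal)
    (hqc : ∀ P Q : X →₀ ℝ, isConstrainedFSProb f c P → isConstrainedFSProb f c Q →
      ∀ lam : ℝ, 0 ≤ lam → lam ≤ 1 →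
        F (lam • P + (1 - lam) • Q) ≤ max (F P) (F Q)) :
    ∀ n : ℕ, ∀ P : X →₀ ℝ, isConstrainedFSProb f c P → P.support.card ≤ n →
      F P ≤ sSup (F '' {P | isConstrainedFSProb f c P ∧ P.support.card ≤ k + 1}) := by
  intro n
  induction n with
  | zero =>
    intro P hP hcard
    exact le_sSup ⟨P, ⟨hP, by omega⟩, rfl⟩
  | succ m ih =>
    intro P hP hcard
    by_cases hsmall : P.support.card ≤ k + 1
    · exact le_sSup ⟨P, ⟨hP, hsmall⟩, rfl⟩
    · push_neg at hsmall
      obtain ⟨w, hw0, hwsub, hwsum, hwmom⟩ := tyurin_exists_kernel f P.support hsmall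
      -- both a negative and a positive coordinate exist
      have hneg : ∃ x, w x < 0 := tyurin_exists_neg w P.support hwsub hwsum hw0
      have hneg' : ∃ x, (-w) x < 0 := by
        apply tyurin_exists_neg (-w) P.support
        · rw [Finsupp.support_neg]; exact hwsub
        · simp only [Finsupp.coe_neg, Pi.neg_apply, Finset.sum_neg_distrib, hwsum, neg_zero]
        · simpa using hw0
      obtain ⟨t₁, ht₁, hQ₁, hc₁⟩ := tyurin_shrink f c P w hP hwsub hwsum hwmom hneg
      obtain ⟨t₂, ht₂, hQ₂, hc₂⟩ := tyurin_shrink f c P (-w) hP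
        (by rw [Finsupp.support_neg]; exact hwsub)
        (by simp only [Finsupp.coe_neg, Pi.neg_apply, Finset.sum_neg_distrib, hwsum, neg_zero])
        (fun i => by
          simp only [Finsupp.coe_neg, Pi.neg_apply, neg_mul]
          rw [Finset.sum_neg_distrib, hwmom i, neg_zero])
        hneg'
      set Q₁ := P + t₁ • w with hQ₁def
      set Q₂ := P + t₂ • (-w) with hQ₂def
      set lam : ℝ := t₂ / (t₁ + t₂) with hlam
      have htt : 0 < t₁ + t₂ := by linarith
      have hlam0 : 0 ≤ lam := le_of_lt (div_pos ht₂ htt)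
      have hlam1 : lam ≤ 1 := by
        rw [hlam, div_le_one htt]; linarith
      have heq : lam • Q₁ + (1 - lam) • Q₂ = P := by
        ext x
        simp only [hQ₁def, hQ₂def, Finsupp.coe_add, Finsupp.coe_smul, Pi.add_apply,
          Pi.smul_apply, Finsupp.coe_neg, Pi.neg_apply, smul_eq_mul, hlam]
        field_simp
        ring
      have hFP : F P ≤ max (F Q₁) (F Q₂) := by
        rw [← heq]
        exact hqc Q₁ Q₂ hQ₁ hQ₂ lam hlam0 hlam1
      refine hFP.trans (max_le ?_ ?_)
      · exact ih Q₁ hQ₁ (by omega)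
      · exact ih Q₂ hQ₂ (by omega)

/-- **Theorem (Tyurin).** Let `X` be a set, `k ∈ ℕ`, `f₁, …, f_k : X → ℝ`,
`c₁, …, c_k ∈ ℝ`, and let `𝒫` be the set of all finitely supported probability measures
`P` on `X` with `∫ fᵢ dP = cᵢ` for all `i`. If `F : 𝒫 → ℝ ∪ {±∞}` is quasi-convex, then
`sup{F(P) : P ∈ 𝒫} = sup{F(P) : P ∈ 𝒫, P concentrated on at most k + 1 points}`. -/
theorem tyurin_reduction {X : Type*} (k : ℕ) (hk : 0 < k)
    (f : Fin k → X → ℝ) (c : Fin k → ℝ) (F : (X →₀ ℝ) → EReal)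
    (hqc : ∀ P Q : X →₀ ℝ, isConstrainedFSProb f c P → isConstrainedFSProb f c Q →
      ∀ lam : ℝ, 0 ≤ lam → lam ≤ 1 →
        F (lam • P + (1 - lam) • Q) ≤ max (F P) (F Q)) :
    sSup (F '' {P | isConstrainedFSProb f c P}) =
      sSup (F '' {P | isConstrainedFSProb f c P ∧ P.support.card ≤ k + 1}) := by
  apply le_antisymm
  · apply sSup_le
    rintro a ⟨P, hP, rfl⟩
    exact tyurin_key k f c F hqc P.support.card P hP le_rfl
  · exact sSup_le_sSup (Set.image_mono (fun P h => h.1))
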